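/- Let T1, T2, T3 be the binary trees on Fin 5 with nontrivial split sets Σ(T1) = {{1,2}, {1,2,3}}, Σ(T2) = {{1,3}, {1,3,4}}, Σ(T3) = {{1,2,3}, {1,3}}. Then for the Jukes–Cantor model, the image of ψ_{T3} is contained in the Zariski closure of the image of the mixture parameterization ψ_{T1,T2}: every polynomial that vanishes on the entire image of ψ_{T1,T2} also vanishes at ψ_{T3}(s) for every parameter choice s. (Equivalently, V_{T3} ⊆ V_{T1} ∗ V_{T2} for the JC model.) -/

import Mathlib

open scoped BigOperators

/-- The group `G = ℤ/2 × ℤ/2` used for 4-state group-based models. -/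
abbrev Gp : Type := (ZMod 2) × (ZMod 2)

/-- A split (subset of the taxa `Fin n`) is nontrivial if `2 ≤ |A| ≤ n - 2`. -/
def Split.Nontriv {n : ℕ} (A : Finset (Fin n)) : Prop :=
  2 ≤ A.card ∧ A.card ≤ n - 2

/-- Two splits are compatible if one of the four mutual intersections is empty. -/
def Split.Compat {n : ℕ} (A B : Finset (Fin n)) : Prop :=
  A ∩ B = ∅ ∨ A ∩ Bᶜ = ∅ ∨ Aᶜ ∩ B = ∅ ∨ Aᶜ ∩ Bᶜ = ∅

instance {n : ℕ} (A : Finset (Fin n)) : Decidable (Split.Nontriv A) := by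
  unfold Split.Nontriv; infer_instance

instance {n : ℕ} (A B : Finset (Fin n)) : Decidable (Split.Compat A B) := by
  unfold Split.Compat; infer_instance

/-- A binary tree on the taxa `Fin n`, encoded by its set `Σ(T)` of `n - 3` pairwise
compatible nontrivial splits, no two of which are equal or complementary. -/
structure PhyloBinaryTree (n : ℕ) where
  splits : Finset (Finset (Fin n))
  card_splits : splits.card = n - 3
  nontriv : ∀ A ∈ splits, Split.Nontriv A
  compat : ∀ A ∈ splits, ∀ B ∈ splits, Split.Compat A B
  not_compl : ∀ A ∈ splits, ∀ B ∈ splits, A ≠ B → A ≠ Bᶜ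

/-- The full split set `Σ*(T)`: the nontrivial splits together with the `n` trivial splits. -/
def fullSplits {n : ℕ} (T : PhyloBinaryTree n) : Finset (Finset (Fin n)) :=
  T.splits ∪ Finset.univ.image (fun i : Fin n => ({i} : Finset (Fin n)))

/-- Two split systems agree up to complementation of individual splits. -/
def sameSplits {n : ℕ} (s t : Finset (Finset (Fin n))) : Prop :=
  ∀ A : Finset (Fin n), (A ∈ s ∨ Aᶜ ∈ s) ↔ (A ∈ t ∨ Aᶜ ∈ t)

/-- Equality of binary trees: split sets agree up to complementation of individual splits. -/
def sameTree {n : ℕ} (T1 T2 : PhyloBinaryTree n) : Prop :=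
  sameSplits T1.splits T2.splits

/-- The Jukes–Cantor Fourier parameterization of the tree `T`. -/
noncomputable def psiJC {n : ℕ} (T : PhyloBinaryTree n) (a : ↥(fullSplits T) → ℂ) :
    (Fin n → Gp) → ℂ := fun g =>
  if (∑ i, g i) = 0 then
    ∏ e : ↥(fullSplits T), (if (∑ i ∈ (e : Finset (Fin n)), g i) = 0 then 1 else a e)
  else 0

/-- The 2-tree mixture parameterization for the Jukes–Cantor model. -/
noncomputable def psiMixJC {n : ℕ} (T1 T2 : PhyloBinaryTree n)
    (a : ↥(fullSplits T1) → ℂ) (b : ↥(fullSplits T2) → ℂ) (pi : ℂ) :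
    (Fin n → Gp) → ℂ := fun g =>
  pi * psiJC T1 a g + (1 - pi) * psiJC T2 b g

/-- The factor contributed by a single split in the K2P Fourier parameterization:
`1` for group element `A = (0,0)`, `c_e` for `C = (0,1)`, `t_e` for `G = (1,0)` or `T = (1,1)`. -/
def k2pFactor (p : ℂ × ℂ) (h : Gp) : ℂ :=
  if h = ((0 : ZMod 2), (0 : ZMod 2)) then 1
  else if h = ((0 : ZMod 2), (1 : ZMod 2)) then p.1
  else p.2

/-- The Kimura 2-parameter Fourier parameterization of the tree `T`; the parameter of
split `e` is a pair `(c_e, t_e)`. -/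
noncomputable def psiK2P {n : ℕ} (T : PhyloBinaryTree n) (s : ↥(fullSplits T) → ℂ × ℂ) :
    (Fin n → Gp) → ℂ := fun g =>
  if (∑ i, g i) = 0 then
    ∏ e : ↥(fullSplits T), k2pFactor (s e) (∑ i ∈ (e : Finset (Fin n)), g i)
  else 0

/-- The 2-tree mixture parameterization for the K2P model. -/
noncomputable def psiMixK2P {n : ℕ} (T1 T2 : PhyloBinaryTree n)
    (s1 : ↥(fullSplits T1) → ℂ × ℂ) (s2 : ↥(fullSplits T2) → ℂ × ℂ) (pi : ℂ) :
    (Fin n → Gp) → ℂ := fun g =>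
  pi * psiK2P T1 s1 g + (1 - pi) * psiK2P T2 s2 g

/-- `Σ(T1) = {12|345, 123|45}` (taxa `1,…,5` identified with `0,…,4 : Fin 5`). -/
def quinT1 : PhyloBinaryTree 5 :=
  ⟨{({0,1} : Finset (Fin 5)), {0,1,2}}, by decide, by decide, by decide, by decide⟩
/-- `Σ(T2) = {13|245, 134|25}`. -/
def quinT2 : PhyloBinaryTree 5 :=
  ⟨{({0,2} : Finset (Fin 5)), {0,2,3}}, by decide, by decide, by decide, by decide⟩
/-- `Σ(T3) = {123|45, 13|245}`. -/
def quinT3 : PhyloBinaryTree 5 :=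
  ⟨{({0,1,2} : Finset (Fin 5)), {0,2}}, by decide, by decide, by decide, by decide⟩

/-- Ambient extension of a `T3` parameter vector: value of `s` on splits of `T3`, else `1`. -/
noncomputable def shat (s : ↥(fullSplits quinT3) → ℂ) (A : Finset (Fin 5)) : ℂ :=
  if h : A ∈ fullSplits quinT3 then s ⟨A, h⟩ else 1

/-- The `T1` parameters realizing `ψ_{T3}(s)` in the mixture. -/
noncomputable def ahat (s : ↥(fullSplits quinT3) → ℂ) (A : Finset (Fin 5)) : ℂ :=
  if A = {0,1,2} then 0
  else if A = {0,1} then 1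
  else if A = {1} then shat s {0,2} * shat s {1}
  else shat s A

/-- The `T2` parameters realizing `ψ_{T3}(s)` in the mixture. -/
noncomputable def bhat (s : ↥(fullSplits quinT3) → ℂ) (A : Finset (Fin 5)) : ℂ :=
  if A = {0,2,3} then 1 else shat s A

lemma quin_fullSplits3 : fullSplits quinT3 =
    ({{0},{1},{2},{3},{4},{0,1,2},{0,2}} : Finset (Finset (Fin 5))) := by decide

lemma quin_fullSplits1 : fullSplits quinT1 =
    ({{0},{1},{2},{3},{4},{0,1},{0,1,2}} : Finset (Finset (Fin 5))) := by decide

lemma quin_fullSplits2 : fullSplits quinT2 =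
    ({{0},{1},{2},{3},{4},{0,2},{0,2,3}} : Finset (Finset (Fin 5))) := by decide

lemma quin_key (s : ↥(fullSplits quinT3) → ℂ) :
    psiJC quinT3 s = psiMixJC quinT1 quinT2 (fun e => ahat s e) (fun e => bhat s e)
      (1 - shat s {0,1,2}) := by
  funext g
  simp only [psiMixJC, psiJC]
  by_cases hg : (∑ i, g i) = 0
  · rw [if_pos hg, if_pos hg, if_pos hg]
    have hP3 : (∏ e : ↥(fullSplits quinT3),
          (if (∑ i ∈ (e : Finset (Fin 5)), g i) = 0 then 1 else s e))
        = ∏ A ∈ fullSplits quinT3, (if (∑ i ∈ A, g i) = 0 then 1 else shat s A) := by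
      rw [← Finset.prod_coe_sort (fullSplits quinT3)
        (fun A => if (∑ i ∈ A, g i) = 0 then 1 else shat s A)]
      exact Fintype.prod_congr _ _ (fun e => by simp only [shat, dif_pos e.2])
    have hP1 : (∏ e : ↥(fullSplits quinT1),
          (if (∑ i ∈ (e : Finset (Fin 5)), g i) = 0 then 1 else ahat s (e : Finset (Fin 5))))
        = ∏ A ∈ fullSplits quinT1, (if (∑ i ∈ A, g i) = 0 then 1 else ahat s A) :=
      Finset.prod_coe_sort (fullSplits quinT1)
        (fun A => if (∑ i ∈ A, g i) = 0 then 1 else ahat s A)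
    have hP2 : (∏ e : ↥(fullSplits quinT2),
          (if (∑ i ∈ (e : Finset (Fin 5)), g i) = 0 then 1 else bhat s (e : Finset (Fin 5))))
        = ∏ A ∈ fullSplits quinT2, (if (∑ i ∈ A, g i) = 0 then 1 else bhat s A) :=
      Finset.prod_coe_sort (fullSplits quinT2)
        (fun A => if (∑ i ∈ A, g i) = 0 then 1 else bhat s A)
    rw [hP3, hP1, hP2, quin_fullSplits3, quin_fullSplits1, quin_fullSplits2]
    rw [Finset.prod_insert (by decide), Finset.prod_insert (by decide),
      Finset.prod_insert (by decide), Finset.prod_insert (by decide),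
      Finset.prod_insert (by decide), Finset.prod_insert (by decide), Finset.prod_singleton]
    rw [Finset.prod_insert (by decide), Finset.prod_insert (by decide),
      Finset.prod_insert (by decide), Finset.prod_insert (by decide),
      Finset.prod_insert (by decide), Finset.prod_insert (by decide), Finset.prod_singleton]
    rw [Finset.prod_insert (by decide), Finset.prod_insert (by decide),
      Finset.prod_insert (by decide), Finset.prod_insert (by decide),
      Finset.prod_insert (by decide), Finset.prod_insert (by decide), Finset.prod_singleton]
    have hs01 : (∑ i ∈ ({0,1} : Finset (Fin 5)), g i) = g 0 + g 1 := by
      rw [Finset.sum_insert (by decide), Finset.sum_singleton]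
    have hs012 : (∑ i ∈ ({0,1,2} : Finset (Fin 5)), g i) = g 0 + (g 1 + g 2) := by
      rw [Finset.sum_insert (by decide), Finset.sum_insert (by decide), Finset.sum_singleton]
    have hs02 : (∑ i ∈ ({0,2} : Finset (Fin 5)), g i) = g 0 + g 2 := by
      rw [Finset.sum_insert (by decide), Finset.sum_singleton]
    have hs023 : (∑ i ∈ ({0,2,3} : Finset (Fin 5)), g i) = g 0 + (g 2 + g 3) := by
      rw [Finset.sum_insert (by decide), Finset.sum_insert (by decide), Finset.sum_singleton]
    simp only [Finset.sum_singleton, hs01, hs012, hs02, hs023]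
    have ha0 : ahat s {0} = shat s {0} := by
      unfold ahat; rw [if_neg (by decide), if_neg (by decide), if_neg (by decide)]
    have ha1 : ahat s {1} = shat s {0,2} * shat s {1} := by
      unfold ahat; rw [if_neg (by decide), if_neg (by decide), if_pos rfl]
    have ha2 : ahat s {2} = shat s {2} := by
      unfold ahat; rw [if_neg (by decide), if_neg (by decide), if_neg (by decide)]
    have ha3 : ahat s {3} = shat s {3} := by
      unfold ahat; rw [if_neg (by decide), if_neg (by decide), if_neg (by decide)]
    have ha4 : ahat s {4} = shat s {4} := by
      unfold ahat; rw [if_neg (by decide), if_neg (by decide), if_neg (by decide)]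
    have ha01 : ahat s {0,1} = 1 := by
      unfold ahat; rw [if_neg (by decide), if_pos rfl]
    have ha012 : ahat s {0,1,2} = 0 := by
      unfold ahat; rw [if_pos rfl]
    have hb : ∀ A : Finset (Fin 5), A ≠ {0,2,3} → bhat s A = shat s A := by
      intro A hA; unfold bhat; rw [if_neg hA]
    have hb023 : bhat s {0,2,3} = 1 := by unfold bhat; rw [if_pos rfl]
    rw [ha0, ha1, ha2, ha3, ha4, ha01, ha012, hb023,
      hb {0} (by decide), hb {1} (by decide), hb {2} (by decide), hb {3} (by decide),
      hb {4} (by decide), hb {0,2} (by decide)]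
    simp only [ite_self]
    by_cases h3 : g 0 + (g 1 + g 2) = 0
    · have hneg : ∀ x : Gp, -x = x := by decide
      have hg1 : g 1 = g 0 + g 2 := by
        have h3' : g 1 + (g 0 + g 2) = 0 := by rw [← h3]; abel
        rw [← hneg (g 0 + g 2)]
        exact eq_neg_of_add_eq_zero_left h3'
      simp only [h3, ← hg1, eq_self_iff_true, if_true]
      by_cases hg1z : g 1 = 0
      · simp only [hg1z, eq_self_iff_true, if_true]; ring
      · simp only [if_neg hg1z, eq_self_iff_true, if_true]; ring
    · simp only [if_neg h3]; ring
  · rw [if_neg hg, if_neg hg, if_neg hg]; ring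

/-- for the JC model, `V_{T3} ⊆ V_{T1} ∗ V_{T2}` for the three 5-taxon trees
above: every polynomial vanishing on the image of the mixture `ψ_{T1,T2}` vanishes on the
image of `ψ_{T3}`. -/
theorem jc_five_taxa_containment :
    ∀ f : MvPolynomial (Fin 5 → Gp) ℂ,
      (∀ (a : ↥(fullSplits quinT1) → ℂ) (b : ↥(fullSplits quinT2) → ℂ) (pi : ℂ),
        MvPolynomial.eval (psiMixJC quinT1 quinT2 a b pi) f = 0) →
      ∀ s : ↥(fullSplits quinT3) → ℂ, MvPolynomial.eval (psiJC quinT3 s) f = 0 := by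
  intro f hf s
  rw [quin_key s]
  exact hf _ _ _
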